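/- (Stationary points are fixed points.) Suppose all factors f_a are positive, the beliefs b_i (i ∈ I) and b_a (a ∈ A_BP) are positive probability mass functions satisfying the marginalization constraints b_i(x_i) = ∑_{x_a\x_i} b_a(x_a) for all a ∈ A_BP, i ∈ N(a), and there exist real-valued functions λ_{a,i} on S_i (a ∈ A_BP, i ∈ N(a)) and real constants γ_i (i ∈ I_MF\I_BP), γ_a (a ∈ A_BP) such that: for all i ∈ I and all x_i, ln b_i(x_i) = ∑_{a∈N_BP(i)} λ_{a,i}(x_i) + ∑_{a∈N_MF(i)} ∑_{x_a\x_i} (∏_{j∈N(a)\i} b_j(x_j)) ln f_a(x_a) + |N_BP(i)| + 1_{I_MF\I_BP}(i)·γ_i − 1, and for all a ∈ A_BP and all x_a, ln b_a(x_a) = ln f_a(x_a) − ∑_{i∈N(a)} λ_{a,i}(x_i) + ∑_{i∈N(a)} ln b_i(x_i) + γ_a − 1. Then there exist positive messages n_{i→a}, m^BP_{a→i}, m^MF_{a→i} and positive constants z_i (with z_i = 1 for i ∈ I_BP) and z_a satisfying the combined BP–MF fixed-point equations: n_{i→a}(x_i) = z_i ∏_{c∈N_BP(i)\a} m^BP_{c→i}(x_i)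 ∏_{c∈N_MF(i)} m^MF_{c→i}(x_i) (a ∈ A, i ∈ N(a)); m^BP_{a→i}(x_i) = z_a ∑_{x_a\x_i} f_a(x_a) ∏_{j∈N(a)\i} n_{j→a}(x_j) (a ∈ A_BP); m^MF_{a→i}(x_i) = exp(∑_{x_a\x_i} (∏_{j∈N(a)\i} n_{j→a}(x_j)) ln f_a(x_a)) (a ∈ A_MF); such that b_a(x_a) = z_a f_a(x_a) ∏_{i∈N(a)} n_{i→a}(x_i) for all a ∈ A_BP and b_i(x_i) = z_i ∏_{a∈N_BP(i)} m^BP_{a→i}(x_i) ∏_{a∈N_MF(i)} m^MF_{a→i}(x_i) for all i ∈ I. -/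

import Mathlib

open Finset

abbrev Cfg {ι : Type} (S : ι → Type) (t : Finset ι) : Type :=
  ∀ j : {x // x ∈ t}, S j.1

lemma prod_split_ne {ι : Type} [DecidableEq ι] {t : Finset ι} {M : Type} [CommMonoid M]
    (g : {x // x ∈ t} → M) {i : ι} (hi : i ∈ t) :
    ∏ j : {x // x ∈ t}, g j =
      g ⟨i, hi⟩ * ∏ j ∈ univ.filter (fun j : {x // x ∈ t} => j.1 ≠ i), g j := by
  have hset : univ.filter (fun j : {x // x ∈ t} => j.1 = i) = {⟨i, hi⟩} := by
    ext j; simp [Subtype.ext_iff]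
  rw [← Finset.prod_filter_mul_prod_filter_not univ (fun j : {x // x ∈ t} => j.1 = i) g, hset,
    Finset.prod_singleton]

set_option maxHeartbeats 4000000 in
theorem statement9
    {ι α : Type} [Fintype ι] [Fintype α] [DecidableEq ι] [DecidableEq α]
    (S : ι → Type) [∀ i, Fintype (S i)] [∀ i, Nonempty (S i)] [∀ i, DecidableEq (S i)]
    (N : α → Finset ι) (αBP αMF : Finset α)
    (hdisj : Disjoint αBP αMF) (hcov : αBP ∪ αMF = Finset.univ)
    (hIcov : ∀ i : ι, i ∈ αBP.biUnion N ∪ αMF.biUnion N)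
    (f : ∀ a : α, Cfg S (N a) → ℝ) (hf : ∀ a xa, 0 < f a xa)
    (ba : ∀ a : α, Cfg S (N a) → ℝ) (bi : ∀ i : ι, S i → ℝ)
    (hbapos : ∀ a ∈ αBP, ∀ xa, 0 < ba a xa)
    (hbipos : ∀ i : ι, ∀ xi, 0 < bi i xi)
    (hbanorm : ∀ a ∈ αBP, ∑ xa : Cfg S (N a), ba a xa = 1)
    (hbinorm : ∀ i : ι, ∑ xi : S i, bi i xi = 1)
    (hmarg : ∀ a ∈ αBP, ∀ i : ι, ∀ hi : i ∈ N a, ∀ xi : S i,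
      bi i xi = ∑ xa : Cfg S (N a), (if xa ⟨i, hi⟩ = xi then ba a xa else 0))
    (lam : α → ∀ i : ι, S i → ℝ) (γi : ι → ℝ) (γa : α → ℝ)
    (hstat1 : ∀ i : ι, ∀ xi : S i,
      Real.log (bi i xi) =
        (∑ a ∈ αBP.filter (fun c => i ∈ N c), lam a i xi)
        + (∑ a ∈ αMF.filter (fun c => i ∈ N c),
            if h : i ∈ N a then
              ∑ xa : Cfg S (N a),
                (if xa ⟨i, h⟩ = xi then
                  (∏ j ∈ univ.filter (fun j : {x // x ∈ N a} => j.1 ≠ i),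
                    bi j.1 (xa j)) * Real.log (f a xa)
                else 0)
            else 0)
        + ((αBP.filter (fun c => i ∈ N c)).card : ℝ)
        + (if i ∈ αMF.biUnion N \ αBP.biUnion N then γi i else 0)
        - 1)
    (hstat2 : ∀ a ∈ αBP, ∀ xa : Cfg S (N a),
      Real.log (ba a xa) =
        Real.log (f a xa)
        - (∑ j : {x // x ∈ N a}, lam a j.1 (xa j))
        + (∑ j : {x // x ∈ N a}, Real.log (bi j.1 (xa j)))
        + γa a - 1) :
    ∃ (n : ∀ i : ι, α → S i → ℝ) (mBP mMF : α → ∀ i : ι, S i → ℝ)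
      (zi : ι → ℝ) (za : α → ℝ),
      (∀ i : ι, ∀ a : α, i ∈ N a → ∀ xi, 0 < n i a xi) ∧
      (∀ a ∈ αBP, ∀ i ∈ N a, ∀ xi, 0 < mBP a i xi) ∧
      (∀ a ∈ αMF, ∀ i ∈ N a, ∀ xi, 0 < mMF a i xi) ∧
      (∀ i, 0 < zi i) ∧ (∀ i ∈ αBP.biUnion N, zi i = 1) ∧
      (∀ a ∈ αBP, 0 < za a) ∧
      (∀ a : α, ∀ i ∈ N a, ∀ xi : S i,
        n i a xi = zi i *
          (∏ c ∈ (αBP.filter (fun c => i ∈ N c)).erase a, mBP c i xi) *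
          ∏ c ∈ αMF.filter (fun c => i ∈ N c), mMF c i xi) ∧
      (∀ a ∈ αBP, ∀ i : ι, ∀ hi : i ∈ N a, ∀ xi : S i,
        mBP a i xi = za a * ∑ xa : Cfg S (N a),
          (if xa ⟨i, hi⟩ = xi then
            f a xa * ∏ j ∈ univ.filter (fun j : {x // x ∈ N a} => j.1 ≠ i), n j.1 a (xa j)
          else 0)) ∧
      (∀ a ∈ αMF, ∀ i : ι, ∀ hi : i ∈ N a, ∀ xi : S i,
        mMF a i xi = Real.exp (∑ xa : Cfg S (N a),
          (if xa ⟨i, hi⟩ = xi then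
            (∏ j ∈ univ.filter (fun j : {x // x ∈ N a} => j.1 ≠ i), n j.1 a (xa j)) *
              Real.log (f a xa)
          else 0))) ∧
      (∀ a ∈ αBP, ∀ xa : Cfg S (N a),
        ba a xa = za a * f a xa * ∏ j : {x // x ∈ N a}, n j.1 a (xa j)) ∧
      (∀ i : ι, ∀ xi : S i,
        bi i xi = zi i * (∏ a ∈ αBP.filter (fun c => i ∈ N c), mBP a i xi) *
          ∏ a ∈ αMF.filter (fun c => i ∈ N c), mMF a i xi) := by
  have hd1 : ∀ i, i ∈ αBP.biUnion N → (1:ℝ) ≤ ((αBP.filter (fun c => i ∈ N c)).card : ℝ) := by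
    intro i hi
    rw [Finset.mem_biUnion] at hi
    obtain ⟨a, ha, hia⟩ := hi
    have hmem : a ∈ αBP.filter (fun c => i ∈ N c) := Finset.mem_filter.mpr ⟨ha, hia⟩
    exact_mod_cast Finset.card_pos.mpr ⟨a, hmem⟩
  have hBi0 : ∀ i, i ∉ αBP.biUnion N → αBP.filter (fun c => i ∈ N c) = ∅ := by
    intro i hi
    rw [Finset.filter_eq_empty_iff]
    intro a ha hia
    exact hi (Finset.mem_biUnion.mpr ⟨a, ha, hia⟩)
  set d : ι → ℝ := fun i => ((αBP.filter (fun c => i ∈ N c)).card : ℝ) with hdDef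
  set mBP : α → ∀ i : ι, S i → ℝ :=
    fun a i xi => Real.exp (lam a i xi + (1 - 1 / d i)) with hmBPdef
  set mMF : α → ∀ i : ι, S i → ℝ := fun a i xi =>
    if h : i ∈ N a then
      Real.exp (∑ xa : Cfg S (N a),
        (if xa ⟨i, h⟩ = xi then
          (∏ j ∈ univ.filter (fun j : {x // x ∈ N a} => j.1 ≠ i), bi j.1 (xa j)) *
            Real.log (f a xa)
        else 0))
    else 1 with hmMFdef
  set zi : ι → ℝ := fun i => if i ∈ αBP.biUnion N then 1 else Real.exp (γi i - 1) with hzidef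
  set za : α → ℝ :=
    fun a => Real.exp (γa a - 1 + ∑ j : {x // x ∈ N a}, (1 - 1 / d j.1)) with hzadef
  set n : ∀ i : ι, α → S i → ℝ := fun i a xi =>
    zi i * (∏ c ∈ (αBP.filter (fun c => i ∈ N c)).erase a, mBP c i xi) *
      ∏ c ∈ αMF.filter (fun c => i ∈ N c), mMF c i xi with hndef
  have hmBPpos : ∀ a i xi, 0 < mBP a i xi := fun a i xi => Real.exp_pos _
  have hmMFpos : ∀ a i xi, 0 < mMF a i xi := by
    intro a i xi
    simp only [hmMFdef]
    split
    · exact Real.exp_pos _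
    · exact one_pos
  have hzipos : ∀ i, 0 < zi i := by
    intro i
    simp only [hzidef]
    split
    · exact one_pos
    · exact Real.exp_pos _
  have hzapos : ∀ a, 0 < za a := fun a => Real.exp_pos _
  have hnpos : ∀ i a xi, 0 < n i a xi := fun i a xi =>
    mul_pos (mul_pos (hzipos i) (Finset.prod_pos fun c _ => hmBPpos c i xi))
      (Finset.prod_pos fun c _ => hmMFpos c i xi)
  -- F1 : the fixed-point equation for bi
  have F1 : ∀ (i : ι) (xi : S i),
      bi i xi = zi i * (∏ a ∈ αBP.filter (fun c => i ∈ N c), mBP a i xi) *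
        ∏ a ∈ αMF.filter (fun c => i ∈ N c), mMF a i xi := by
    intro i xi
    have hMFprod : (∏ a ∈ αMF.filter (fun c => i ∈ N c), mMF a i xi)
        = Real.exp (∑ a ∈ αMF.filter (fun c => i ∈ N c),
            if h : i ∈ N a then
              ∑ xa : Cfg S (N a),
                (if xa ⟨i, h⟩ = xi then
                  (∏ j ∈ univ.filter (fun j : {x // x ∈ N a} => j.1 ≠ i),
                    bi j.1 (xa j)) * Real.log (f a xa)
                else 0)
            else 0) := by
      rw [Real.exp_sum]
      refine Finset.prod_congr rfl fun a ha => ?_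
      have hia : i ∈ N a := (Finset.mem_filter.mp ha).2
      simp only [hmMFdef, dif_pos hia]
    have hBPprod : (∏ a ∈ αBP.filter (fun c => i ∈ N c), mBP a i xi)
        = Real.exp ((∑ a ∈ αBP.filter (fun c => i ∈ N c), lam a i xi)
            + ((αBP.filter (fun c => i ∈ N c)).card : ℝ) * (1 - 1 / d i)) := by
      simp only [hmBPdef]
      rw [← Real.exp_sum, Finset.sum_add_distrib, Finset.sum_const, nsmul_eq_mul]
    rw [hBPprod, hMFprod]
    by_cases hi : i ∈ αBP.biUnion N
    · have hz1 : zi i = 1 := by simp only [hzidef]; rw [if_pos hi]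
      have hdcard : ((αBP.filter (fun c => i ∈ N c)).card : ℝ) = d i := rfl
      have hdne : d i ≠ 0 := by
        have h1 := hd1 i hi; rw [hdcard] at h1; intro h0; rw [h0] at h1; linarith
      have hdi : ((αBP.filter (fun c => i ∈ N c)).card : ℝ) * (1 - 1 / d i) = d i - 1 := by
        rw [hdcard]; field_simp
      have hind : i ∉ αMF.biUnion N \ αBP.biUnion N := by
        simp [Finset.mem_sdiff, hi]
      have hlog := hstat1 i xi
      rw [if_neg hind] at hlog
      rw [hz1, one_mul, ← Real.exp_add, hdi]
      rw [← Real.exp_log (hbipos i xi), hlog]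
      congr 1
      ring
    · have hz2 : zi i = Real.exp (γi i - 1) := by simp only [hzidef]; rw [if_neg hi]
      have hB0 := hBi0 i hi
      have hind : i ∈ αMF.biUnion N \ αBP.biUnion N := by
        rw [Finset.mem_sdiff]
        refine ⟨?_, hi⟩
        rcases Finset.mem_union.mp (hIcov i) with h | h
        · exact absurd h hi
        · exact h
      have hlog := hstat1 i xi
      rw [if_pos hind, hB0] at hlog
      simp only [Finset.sum_empty, Finset.card_empty] at hlog
      rw [hB0]
      simp only [Finset.sum_empty, hdDef, hB0, Finset.card_empty, Nat.cast_zero, zero_mul,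
        add_zero, Real.exp_zero, mul_one]
      rw [hz2, ← Real.exp_add, ← Real.exp_log (hbipos i xi), hlog]
      congr 1
      push_cast
      ring
  -- F2 : relation between n, mBP and bi when a ∈ N_BP(i)
  have F2 : ∀ a ∈ αBP, ∀ (i : ι), i ∈ N a → ∀ xi, mBP a i xi * n i a xi = bi i xi := by
    intro a ha i hia xi
    have hmem : a ∈ αBP.filter (fun c => i ∈ N c) := Finset.mem_filter.mpr ⟨ha, hia⟩
    rw [F1 i xi, ← Finset.mul_prod_erase _ _ hmem]
    simp only [hndef]
    ring
  have F2' : ∀ (a : α) (i : ι), a ∉ αBP.filter (fun c => i ∈ N c) → ∀ xi,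
      n i a xi = bi i xi := by
    intro a i ha xi
    rw [F1 i xi]
    simp only [hndef, Finset.erase_eq_of_notMem ha]
  -- F3 : the fixed-point equation for ba
  have F3 : ∀ a ∈ αBP, ∀ xa : Cfg S (N a),
      ba a xa = za a * f a xa * ∏ j : {x // x ∈ N a}, n j.1 a (xa j) := by
    intro a ha xa
    have hterm : ∀ j : {x // x ∈ N a},
        n j.1 a (xa j) = bi j.1 (xa j) * Real.exp (-(lam a j.1 (xa j) + (1 - 1 / d j.1))) := by
      intro j
      have h2 := F2 a ha j.1 j.2 (xa j)
      have hx : n j.1 a (xa j) =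
          bi j.1 (xa j) / Real.exp (lam a j.1 (xa j) + (1 - 1 / d j.1)) := by
        rw [eq_div_iff (Real.exp_ne_zero _), mul_comm]
        exact h2
      rw [hx, Real.exp_neg, div_eq_mul_inv]
    have hprod : (∏ j : {x // x ∈ N a}, n j.1 a (xa j)) =
        Real.exp ((∑ j : {x // x ∈ N a}, Real.log (bi j.1 (xa j)))
          + ∑ j : {x // x ∈ N a}, -(lam a j.1 (xa j) + (1 - 1 / d j.1))) := by
      rw [Real.exp_add, Real.exp_sum, Real.exp_sum, ← Finset.prod_mul_distrib]
      refine Finset.prod_congr rfl fun j _ => ?_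
      rw [hterm j, Real.exp_log (hbipos j.1 (xa j))]
    rw [hprod, hzadef, ← Real.exp_log (hf a xa), ← Real.exp_add, ← Real.exp_add,
      ← Real.exp_log (hbapos a ha xa), hstat2 a ha xa]
    congr 1
    simp only [neg_add, Finset.sum_add_distrib, Finset.sum_neg_distrib]
    ring
  -- F4 : the BP message equation
  have F4 : ∀ a ∈ αBP, ∀ (i : ι) (hi : i ∈ N a) (xi : S i),
      mBP a i xi = za a * ∑ xa : Cfg S (N a),
        (if xa ⟨i, hi⟩ = xi then
          f a xa * ∏ j ∈ univ.filter (fun j : {x // x ∈ N a} => j.1 ≠ i), n j.1 a (xa j)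
        else 0) := by
    intro a ha i hi xi
    have hnne : n i a xi ≠ 0 := ne_of_gt (hnpos i a xi)
    rw [Finset.mul_sum]
    have key : ∀ xa : Cfg S (N a),
        za a * (if xa ⟨i, hi⟩ = xi then
            f a xa * ∏ j ∈ univ.filter (fun j : {x // x ∈ N a} => j.1 ≠ i), n j.1 a (xa j)
          else 0)
        = (if xa ⟨i, hi⟩ = xi then ba a xa else 0) / n i a xi := by
      intro xa
      by_cases h : xa ⟨i, hi⟩ = xi
      · rw [if_pos h, if_pos h, F3 a ha xa,
          prod_split_ne (fun j : {x // x ∈ N a} => n j.1 a (xa j)) hi]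
        simp only [h]
        field_simp
      · simp [h]
    rw [Finset.sum_congr rfl fun xa _ => key xa, ← Finset.sum_div,
      ← hmarg a ha i hi xi]
    rw [eq_div_iff hnne]
    exact F2 a ha i hi xi
  -- F5 : the MF message equation
  have F5 : ∀ a ∈ αMF, ∀ (i : ι) (hi : i ∈ N a) (xi : S i),
      mMF a i xi = Real.exp (∑ xa : Cfg S (N a),
        (if xa ⟨i, hi⟩ = xi then
          (∏ j ∈ univ.filter (fun j : {x // x ∈ N a} => j.1 ≠ i), n j.1 a (xa j)) *
            Real.log (f a xa)
        else 0)) := by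
    intro a ha i hi xi
    have haBP : a ∉ αBP := fun h => Finset.disjoint_left.mp hdisj h ha
    simp only [hmMFdef, dif_pos hi]
    congr 1
    refine Finset.sum_congr rfl fun xa _ => ?_
    by_cases h : xa ⟨i, hi⟩ = xi
    · rw [if_pos h, if_pos h]
      congr 1
      refine Finset.prod_congr rfl fun j _ => ?_
      exact (F2' a j.1 (fun hm => haBP (Finset.mem_filter.mp hm).1) (xa j)).symm
    · rw [if_neg h, if_neg h]
  refine ⟨n, mBP, mMF, zi, za,
    fun i a _ xi => hnpos i a xi,
    fun a _ i _ xi => hmBPpos a i xi,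
    fun a _ i _ xi => hmMFpos a i xi,
    hzipos, ?_, fun a _ => hzapos a,
    fun a i _ xi => rfl, F4, F5, F3, F1⟩
  intro i hi
  simp only [hzidef]
  rw [if_pos hi]
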